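/- The two-sided preconditioned matrix H^{−1/2} K H^{−1/2} is orthogonally similar to S = [[I_m, Σ], [Σᵀ, −I_n]]: the (m+n)×(m+n) matrix O = diag(M^{1/2} Ũ, N^{1/2} Ṽ) is orthogonal and H^{−1/2} K H^{−1/2} = O S Oᵀ. -/

import Mathlib

open Matrix

namespace Matrix.PosSemidef

open scoped ComplexOrder

/-- The positive semidefinite square root of a positive semidefinite matrix
(the definition of `Matrix.PosSemidef.sqrt` in the older Mathlib, which has since been removed). -/
noncomputable def sqrt {n : Type*} {𝕜 : Type*} [Fintype n] [DecidableEq n] [RCLike 𝕜]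
    {A : Matrix n n 𝕜} (hA : A.PosSemidef) : Matrix n n 𝕜 :=
  hA.1.eigenvectorUnitary.1 * diagonal ((↑) ∘ (fun x : ℝ => √x) ∘ hA.1.eigenvalues) *
  (star hA.1.eigenvectorUnitary : Matrix n n 𝕜)

end Matrix.PosSemidef

private lemma my_sqrt_mul_self {k : ℕ} {M : Matrix (Fin k) (Fin k) ℝ} (hM : M.PosSemidef) :
    hM.sqrt * hM.sqrt = M := by
  unfold Matrix.PosSemidef.sqrt
  set U := hM.1.eigenvectorUnitary
  have hUU : (star U : Matrix (Fin k) (Fin k) ℝ) * (U : Matrix (Fin k) (Fin k) ℝ) = 1 :=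
    Unitary.coe_star_mul_self U
  have hD : diagonal ((↑) ∘ (fun x : ℝ => √x) ∘ hM.1.eigenvalues) *
      diagonal ((↑) ∘ (fun x : ℝ => √x) ∘ hM.1.eigenvalues) =
      diagonal (RCLike.ofReal ∘ hM.1.eigenvalues : Fin k → ℝ) := by
    rw [diagonal_mul_diagonal]
    congr 1; funext i
    simp [Real.mul_self_sqrt (hM.eigenvalues_nonneg i)]
  calc _ = (U : Matrix (Fin k) (Fin k) ℝ) * (diagonal ((↑) ∘ (fun x : ℝ => √x) ∘ hM.1.eigenvalues) *
      ((star U : Matrix (Fin k) (Fin k) ℝ) * (U : Matrix (Fin k) (Fin k) ℝ)) *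
      diagonal ((↑) ∘ (fun x : ℝ => √x) ∘ hM.1.eigenvalues)) * (star U : Matrix (Fin k) (Fin k) ℝ) := by
        simp only [Matrix.mul_assoc]; rfl
    _ = M := by
        rw [hUU, Matrix.mul_one, hD]
        conv_rhs => rw [hM.1.spectral_theorem]
        simp [Matrix.mul_assoc]; rfl

private lemma my_sqrt_herm {k : ℕ} {M : Matrix (Fin k) (Fin k) ℝ} (hM : M.PosSemidef) :
    hM.sqrt.IsHermitian := by
  unfold Matrix.PosSemidef.sqrt Matrix.IsHermitian
  simp [conjTranspose_mul, Matrix.mul_assoc, Matrix.star_eq_conjTranspose,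
    Matrix.conjTranspose_eq_transpose_of_trivial]

private lemma sqrt_facts {k : ℕ} {M U : Matrix (Fin k) (Fin k) ℝ} (hM : M.PosDef)
    (hU : Uᵀ * M * U = 1) :
    (hM.posSemidef.sqrt)ᵀ = hM.posSemidef.sqrt ∧
    (hM.posSemidef.sqrt)⁻¹ * M = hM.posSemidef.sqrt ∧
    M * (hM.posSemidef.sqrt)⁻¹ = hM.posSemidef.sqrt ∧
    (hM.posSemidef.sqrt * U)ᵀ * (hM.posSemidef.sqrt * U) = 1 ∧
    (hM.posSemidef.sqrt * U) * (hM.posSemidef.sqrt * U)ᵀ = 1 := by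
  set P := hM.posSemidef.sqrt with hP
  have hPP : P * P = M := my_sqrt_mul_self hM.posSemidef
  have hPsym : Pᵀ = P := by
    have := my_sqrt_herm hM.posSemidef
    exact (conjTranspose_eq_transpose_of_trivial P).symm.trans this
  have hPdet : IsUnit P.det := by
    have hd : P.det * P.det = M.det := by rw [← det_mul, hPP]
    have := hM.det_pos
    refine isUnit_iff_ne_zero.2 fun h0 => ?_
    rw [h0, mul_zero] at hd; linarith
  have hinvP : P⁻¹ * P = 1 := nonsing_inv_mul P hPdet
  have hPinv : P * P⁻¹ = 1 := mul_nonsing_inv P hPdet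
  have h1 : P⁻¹ * M = P := by rw [← hPP, ← mul_assoc, hinvP, one_mul]
  have h2 : M * P⁻¹ = P := by rw [← hPP, mul_assoc, hPinv, mul_one]
  have h3 : (P * U)ᵀ * (P * U) = 1 := by
    rw [transpose_mul, hPsym, mul_assoc, ← mul_assoc P P U, hPP, ← mul_assoc]
    exact hU
  exact ⟨hPsym, h1, h2, h3, mul_eq_one_comm.mp h3⟩

/-- The two-sided preconditioned matrix `H^{−1/2} K H^{−1/2}` is orthogonally similar to
`S = [[I, Σ], [Σᵀ, −I]]`: the matrix `O = diag(M^{1/2} Ũ, N^{1/2} Ṽ)` is orthogonal and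
`H^{−1/2} K H^{−1/2} = O S Oᵀ`. -/
theorem preconditioned_K_orthogonally_similar (m n : ℕ)
    (M : Matrix (Fin m) (Fin m) ℝ) (N : Matrix (Fin n) (Fin n) ℝ)
    (A : Matrix (Fin m) (Fin n) ℝ)
    (hM : M.PosDef) (hN : N.PosDef)
    (Ut : Matrix (Fin m) (Fin m) ℝ) (Vt : Matrix (Fin n) (Fin n) ℝ)
    (Sig : Matrix (Fin m) (Fin n) ℝ)
    (hUt : Utᵀ * M * Ut = 1) (hVt : Vtᵀ * N * Vt = 1)
    (hSigDiag : ∀ (i : Fin m) (j : Fin n), (i : ℕ) ≠ (j : ℕ) → Sig i j = 0)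
    (hSigNonneg : ∀ (i : Fin m) (j : Fin n), (i : ℕ) = (j : ℕ) → 0 ≤ Sig i j)
    (hA : A = M * Ut * Sig * Vtᵀ * N)
    (K : Matrix (Fin m ⊕ Fin n) (Fin m ⊕ Fin n) ℝ)
    (hK : K = Matrix.fromBlocks M A Aᵀ (-N))
    (Hinvhalf : Matrix (Fin m ⊕ Fin n) (Fin m ⊕ Fin n) ℝ)
    (hHinvhalf : Hinvhalf =
      Matrix.fromBlocks (hM.posSemidef.sqrt)⁻¹ 0 0 (hN.posSemidef.sqrt)⁻¹)
    (O : Matrix (Fin m ⊕ Fin n) (Fin m ⊕ Fin n) ℝ)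
    (hO : O = Matrix.fromBlocks (hM.posSemidef.sqrt * Ut) 0 0 (hN.posSemidef.sqrt * Vt))
    (S : Matrix (Fin m ⊕ Fin n) (Fin m ⊕ Fin n) ℝ)
    (hS : S = Matrix.fromBlocks 1 Sig Sigᵀ (-1)) :
    Oᵀ * O = 1 ∧ O * Oᵀ = 1 ∧ Hinvhalf * K * Hinvhalf = O * S * Oᵀ := by
  obtain ⟨hPsym, hPM, hMP, hPUo, hPUo'⟩ := sqrt_facts hM hUt
  obtain ⟨hQsym, hQN, hNQ, hQVo, hQVo'⟩ := sqrt_facts hN hVt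
  set P := hM.posSemidef.sqrt
  set Q := hN.posSemidef.sqrt
  have hMsym : Mᵀ = M := by
    have := hM.isHermitian
    exact (conjTranspose_eq_transpose_of_trivial M).symm.trans this
  have hNsym : Nᵀ = N := by
    have := hN.isHermitian
    exact (conjTranspose_eq_transpose_of_trivial N).symm.trans this
  have hOT : Oᵀ = Matrix.fromBlocks ((P * Ut)ᵀ) 0 0 ((Q * Vt)ᵀ) := by
    rw [hO, fromBlocks_transpose]; simp
  have hPdet : IsUnit P.det := by
    have hd : P.det * P.det = M.det := by rw [← det_mul, my_sqrt_mul_self hM.posSemidef]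
    have := hM.det_pos
    refine isUnit_iff_ne_zero.2 fun h0 => ?_
    rw [h0, mul_zero] at hd; linarith
  have hQdet : IsUnit Q.det := by
    have hd : Q.det * Q.det = N.det := by rw [← det_mul, my_sqrt_mul_self hN.posSemidef]
    have := hN.det_pos
    refine isUnit_iff_ne_zero.2 fun h0 => ?_
    rw [h0, mul_zero] at hd; linarith
  have hAT : Aᵀ = N * Vt * Sigᵀ * Utᵀ * M := by
    rw [hA]; simp [transpose_mul, hMsym, hNsym, Matrix.mul_assoc]
  refine ⟨?_, ?_, ?_⟩
  · rw [hOT, hO, fromBlocks_multiply]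
    simp only [Matrix.mul_zero, Matrix.zero_mul, add_zero, zero_add]
    rw [hPUo, hQVo, fromBlocks_one]
  · rw [hOT, hO, fromBlocks_multiply]
    simp only [Matrix.mul_zero, Matrix.zero_mul, add_zero, zero_add]
    rw [hPUo', hQVo', fromBlocks_one]
  · rw [hHinvhalf, hK, hS, hOT, hO]
    simp only [fromBlocks_multiply, Matrix.mul_zero, Matrix.zero_mul, add_zero, zero_add,
      Matrix.mul_one, Matrix.mul_neg, Matrix.neg_mul, neg_zero]
    have e11 : P⁻¹ * M * P⁻¹ = P * Ut * (P * Ut)ᵀ := by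
      rw [hPM, mul_nonsing_inv P hPdet, hPUo']
    have e22 : Q⁻¹ * N * Q⁻¹ = Q * Vt * (Q * Vt)ᵀ := by
      rw [hQN, mul_nonsing_inv Q hQdet, hQVo']
    have e12 : P⁻¹ * A * Q⁻¹ = P * Ut * Sig * (Q * Vt)ᵀ := by
      rw [hA, transpose_mul, hQsym]
      calc P⁻¹ * (M * Ut * Sig * Vtᵀ * N) * Q⁻¹
          = (P⁻¹ * M) * Ut * Sig * Vtᵀ * (N * Q⁻¹) := by
            simp only [Matrix.mul_assoc]
        _ = P * Ut * Sig * (Vtᵀ * Q) := by rw [hPM, hNQ]; simp only [Matrix.mul_assoc]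
    have e21 : Q⁻¹ * Aᵀ * P⁻¹ = Q * Vt * Sigᵀ * (P * Ut)ᵀ := by
      rw [hAT, transpose_mul, hPsym]
      calc Q⁻¹ * (N * Vt * Sigᵀ * Utᵀ * M) * P⁻¹
          = (Q⁻¹ * N) * Vt * Sigᵀ * Utᵀ * (M * P⁻¹) := by
            simp only [Matrix.mul_assoc]
        _ = Q * Vt * Sigᵀ * (Utᵀ * P) := by rw [hQN, hMP]; simp only [Matrix.mul_assoc]
    rw [e11, e22, e12, e21]
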